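/- Let 0 < α < 1 and n ≥ 1. Let y_1, …, y_n be independent real random variables with y_i Gaussian with mean μ_i and variance σ_i² > 0, and let q ∈ ℝ satisfy P(for all i ≠ j, |(y_i − μ_i) − (y_j − μ_j)| ≤ s_{ij}·q) ≥ 1 − α. Define the random bounds L_i = 1 + #{j ≠ i : y_i − y_j − s_{ij}·q > 0} and U_i = n − #{j ≠ i : y_i − y_j + s_{ij}·q ≤ 0}. Then P(for all i, L_i ≤ l_i and u_i ≤ U_i) ≥ 1 − α; i.e., Tukey's HSD produces simultaneous confidence intervals for the set-ranks at joint level 1 − α. -/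

import Mathlib

open MeasureTheory ProbabilityTheory

/-- Tukey's HSD produces simultaneous confidence intervals for the set-ranks at joint
level `1 - α` : if `q` satisfies
`P(∀ i ≠ j, |(y i - μ i) - (y j - μ j)| ≤ s i j * q) ≥ 1 - α` with
`s i j = √(σ i ^ 2 + σ j ^ 2)`, then the random bounds
`L i = 1 + #{j ≠ i : y i - y j - s i j * q > 0}` and
`U i = n - #{j ≠ i : y i - y j + s i j * q ≤ 0}` satisfy
`P(∀ i, L i ≤ l i ∧ u i ≤ U i) ≥ 1 - α`, where `l i = 1 + #{j ≠ i : μ j < μ i}` and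
`u i = n - #{j ≠ i : μ j ≥ μ i}` are the set-ranks. -/
theorem stmt_0 {n : ℕ} (hn : 1 ≤ n) {Ω : Type*} [MeasurableSpace Ω]
    (P : Measure Ω) [IsProbabilityMeasure P]
    (μ σ : Fin n → ℝ) (hσ : ∀ i, 0 < σ i)
    (y : Fin n → Ω → ℝ) (hmeas : ∀ i, Measurable (y i))
    (hindep : iIndepFun y P)
    (hdist : ∀ i, P.map (y i) = gaussianReal (μ i) ⟨(σ i) ^ 2, sq_nonneg _⟩)
    (α : ℝ) (hα : α ∈ Set.Ioo (0 : ℝ) 1) (q : ℝ)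
    (hq : ENNReal.ofReal (1 - α) ≤
      P {ω | ∀ i j : Fin n, i ≠ j →
        |(y i ω - μ i) - (y j ω - μ j)| ≤ Real.sqrt ((σ i) ^ 2 + (σ j) ^ 2) * q}) :
    ENNReal.ofReal (1 - α) ≤
      P {ω | ∀ i : Fin n,
        1 + (Finset.univ.filter fun j => j ≠ i ∧
              0 < y i ω - y j ω - Real.sqrt ((σ i) ^ 2 + (σ j) ^ 2) * q).card
            ≤ 1 + (Finset.univ.filter fun j => j ≠ i ∧ μ j < μ i).card ∧
        n - (Finset.univ.filter fun j => j ≠ i ∧ μ i ≤ μ j).card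
            ≤ n - (Finset.univ.filter fun j => j ≠ i ∧
              y i ω - y j ω + Real.sqrt ((σ i) ^ 2 + (σ j) ^ 2) * q ≤ 0).card} := by
  refine le_trans hq (measure_mono ?_)
  intro ω hω i
  constructor
  · refine Nat.add_le_add_left (Finset.card_le_card ?_) 1
    intro j hj
    simp only [Finset.mem_filter, Finset.mem_univ, true_and] at hj ⊢
    obtain ⟨hji, hpos⟩ := hj
    refine ⟨hji, ?_⟩
    have h := hω i j (Ne.symm hji)
    have h2 : (y i ω - μ i) - (y j ω - μ j) ≤ Real.sqrt ((σ i) ^ 2 + (σ j) ^ 2) * q :=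
      le_trans (le_abs_self _) h
    linarith
  · refine Nat.sub_le_sub_left (Finset.card_le_card ?_) n
    intro j hj
    simp only [Finset.mem_filter, Finset.mem_univ, true_and] at hj ⊢
    obtain ⟨hji, hle⟩ := hj
    refine ⟨hji, ?_⟩
    have h := hω i j (Ne.symm hji)
    have h2 : -(Real.sqrt ((σ i) ^ 2 + (σ j) ^ 2) * q) ≤ (y i ω - μ i) - (y j ω - μ j) :=
      neg_le_of_abs_le h
    linarith
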